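/- Let P = {x ∈ ℝⁿ : Cx ≤ d} be a nonempty bounded polyhedron with dim(P) = k < n, defined by finitely many linear inequalities. Then the subsystem C⁼x ≤ d⁼ of implicit equalities (those inequalities that hold with equality on all of P) satisfies rank(C⁼) = n − k and contains at least n − k + 1 inequalities; in particular, the rows of the implicit-equality subsystem are linearly dependent. -/

import Mathlib

open Module Filter

private lemma sum_eq_inner' {n : ℕ} (c x : EuclideanSpace ℝ (Fin n)) :
    ∑ j, c j * x j = inner ℝ c x := by
  simp [PiLp.inner_apply, RCLike.inner_apply, conj_trivial, mul_comm]

private lemma aux_move {n m : ℕ} (C : Fin m → EuclideanSpace ℝ (Fin n)) (d : Fin m → ℝ)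
    (P : Set (EuclideanSpace ℝ (Fin n)))
    (hP : P = {x | ∀ i, ∑ j, C i j * x j ≤ d i})
    (E : Set (Fin m))
    (x₀ : EuclideanSpace ℝ (Fin n)) (hx₀ : x₀ ∈ P)
    (hstrict : ∀ i, i ∉ E → (inner ℝ (C i) x₀ : ℝ) < d i)
    (y : EuclideanSpace ℝ (Fin n)) (hy : ∀ i ∈ E, (inner ℝ (C i) y : ℝ) ≤ 0) :
    ∃ t : ℝ, 0 < t ∧ x₀ + t • y ∈ P := by
  have key : ∀ᶠ t : ℝ in nhds 0, ∀ i, i ∉ E →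
      (inner ℝ (C i) x₀ : ℝ) + t * inner ℝ (C i) y < d i := by
    rw [eventually_all]
    intro i
    by_cases hi : i ∈ E
    · filter_upwards with t h; exact absurd hi h
    · have hc : Continuous fun t : ℝ => (inner ℝ (C i) x₀ : ℝ) + t * inner ℝ (C i) y := by
        continuity
      have ht : Filter.Tendsto (fun t : ℝ => (inner ℝ (C i) x₀ : ℝ) + t * inner ℝ (C i) y)
          (nhds 0) (nhds (inner ℝ (C i) x₀ : ℝ)) := by
        simpa using hc.tendsto 0
      filter_upwards [ht.eventually_lt_const (hstrict i hi)] with t h _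
      exact h
  obtain ⟨t, ht, ht0⟩ := ((key.filter_mono (nhdsWithin_le_nhds (s := Set.Ioi (0:ℝ)))).and
    self_mem_nhdsWithin).exists
  refine ⟨t, ht0, ?_⟩
  rw [hP]
  intro i
  rw [sum_eq_inner']
  have hexp : (inner ℝ (C i) (x₀ + t • y) : ℝ) = inner ℝ (C i) x₀ + t * inner ℝ (C i) y := by
    rw [inner_add_right, real_inner_smul_right]
  rw [hexp]
  by_cases hi : i ∈ E
  · have h1 : (inner ℝ (C i) x₀ : ℝ) ≤ d i := by
      rw [hP] at hx₀
      rw [← sum_eq_inner']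
      exact hx₀ i
    nlinarith [hy i hi, ht0.le]
  · exact (ht i hi).le

private lemma aux_strict {n m : ℕ} (C : Fin m → EuclideanSpace ℝ (Fin n)) (d : Fin m → ℝ)
    (P : Set (EuclideanSpace ℝ (Fin n)))
    (hP : P = {x | ∀ i, ∑ j, C i j * x j ≤ d i})
    (hne : P.Nonempty)
    (E : Set (Fin m)) (hE : E = {i | ∀ x ∈ P, ∑ j, C i j * x j = d i}) :
    ∃ x₀ ∈ P, ∀ i, i ∉ E → (inner ℝ (C i) x₀ : ℝ) < d i := by
  classical
  have hmem : ∀ x ∈ P, ∀ i, (inner ℝ (C i) x : ℝ) ≤ d i := by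
    intro x hx i
    rw [hP] at hx
    rw [← sum_eq_inner']
    exact hx i
  have hw : ∀ i : Fin m, ∃ x, x ∈ P ∧ (i ∉ E → (inner ℝ (C i) x : ℝ) < d i) := by
    intro i
    by_cases hi : i ∈ E
    · exact ⟨hne.choose, hne.choose_spec, fun h => absurd hi h⟩
    · rw [hE] at hi
      simp only [Set.mem_setOf_eq, not_forall] at hi
      obtain ⟨x, hx, hxe⟩ := hi
      refine ⟨x, hx, fun _ => ?_⟩
      rw [sum_eq_inner'] at hxe
      exact lt_of_le_of_ne (hmem x hx i) hxe
  choose z hz1 hz2 using hw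
  refine ⟨(m : ℝ)⁻¹ • ∑ j : Fin m, z j, ?_, ?_⟩
  · rw [hP]
    intro i
    have hm : 0 < (m : ℝ) := by
      have : m ≠ 0 := fun h => (h ▸ i).elim0
      positivity
    rw [sum_eq_inner', real_inner_smul_right, inner_sum]
    have hsum : ∑ j : Fin m, (inner ℝ (C i) (z j) : ℝ) ≤ m * d i := by
      calc ∑ j : Fin m, (inner ℝ (C i) (z j) : ℝ) ≤ ∑ _j : Fin m, d i :=
            Finset.sum_le_sum fun j _ => hmem (z j) (hz1 j) i
        _ = m * d i := by simp [mul_comm]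
    calc (m : ℝ)⁻¹ * ∑ j : Fin m, (inner ℝ (C i) (z j) : ℝ)
        ≤ (m : ℝ)⁻¹ * (m * d i) := by
          exact mul_le_mul_of_nonneg_left hsum (by positivity)
      _ = d i := by field_simp
  · intro i hi
    have hm : 0 < (m : ℝ) := by
      have : m ≠ 0 := fun h => (h ▸ i).elim0
      positivity
    rw [real_inner_smul_right, inner_sum]
    have hsum : ∑ j : Fin m, (inner ℝ (C i) (z j) : ℝ) < m * d i := by
      have := Finset.sum_lt_sum (f := fun j : Fin m => (inner ℝ (C i) (z j) : ℝ))
        (g := fun _ : Fin m => d i)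
        (fun j _ => hmem (z j) (hz1 j) i) ⟨i, Finset.mem_univ i, hz2 i hi⟩
      simpa [mul_comm] using this
    calc (m : ℝ)⁻¹ * ∑ j : Fin m, (inner ℝ (C i) (z j) : ℝ)
        < (m : ℝ)⁻¹ * (m * d i) := by
          exact mul_lt_mul_of_pos_left hsum (by positivity)
      _ = d i := by field_simp

private lemma mem_orth_span {V : Type*} [NormedAddCommGroup V] [InnerProductSpace ℝ V]
    {S : Set V} {v : V} :
    v ∈ (Submodule.span ℝ S)ᗮ ↔ ∀ u ∈ S, (inner ℝ u v : ℝ) = 0 := by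
  constructor
  · intro h u hu
    exact (Submodule.mem_orthogonal _ v).1 h u (Submodule.subset_span hu)
  · intro h
    rw [Submodule.mem_orthogonal]
    intro u hu
    induction hu using Submodule.span_induction with
    | mem x hx => exact h x hx
    | zero => simp
    | add x y _ _ hx hy => simp [inner_add_left, hx, hy]
    | smul a x _ hx => simp [inner_smul_left, hx]

private lemma aux_span {n m : ℕ} (C : Fin m → EuclideanSpace ℝ (Fin n)) (d : Fin m → ℝ)
    (P : Set (EuclideanSpace ℝ (Fin n)))
    (hP : P = {x | ∀ i, ∑ j, C i j * x j ≤ d i})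
    (hne : P.Nonempty)
    (E : Set (Fin m)) (hE : E = {i | ∀ x ∈ P, ∑ j, C i j * x j = d i}) :
    (Submodule.span ℝ (C '' E))ᗮ = vectorSpan ℝ P := by
  apply le_antisymm
  · -- y ⊥ all C i (i ∈ E) → y ∈ vectorSpan
    intro y hy
    rw [mem_orth_span] at hy
    have hy' : ∀ i ∈ E, (inner ℝ (C i) y : ℝ) = 0 := fun i hi =>
      hy (C i) (Set.mem_image_of_mem C hi)
    obtain ⟨x₀, hx₀, hstrict⟩ := aux_strict C d P hP hne E hE
    obtain ⟨t, ht, htP⟩ := aux_move C d P hP E x₀ hx₀ hstrict y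
      (fun i hi => le_of_eq (hy' i hi))
    have hv : t • y ∈ vectorSpan ℝ P := by
      have := vsub_mem_vectorSpan ℝ htP hx₀
      simpa using this
    have : y = t⁻¹ • (t • y) := by
      rw [smul_smul, inv_mul_cancel₀ ht.ne', one_smul]
    rw [this]
    exact Submodule.smul_mem _ _ hv
  · -- vectorSpan ⊆ orthogonal complement
    rw [vectorSpan_def]
    rw [Submodule.span_le]
    rintro v ⟨p, hp, q, hq, rfl⟩
    rw [SetLike.mem_coe, Submodule.mem_orthogonal']
    intro u hu
    induction hu using Submodule.span_induction with
    | mem x hx =>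
      obtain ⟨i, hi, rfl⟩ := hx
      rw [hE] at hi
      have h1 := hi p hp
      have h2 := hi q hq
      rw [sum_eq_inner'] at h1 h2
      rw [real_inner_comm]
      show (inner ℝ (C i) (p -ᵥ q) : ℝ) = 0
      rw [vsub_eq_sub, inner_sub_right, h1, h2, sub_self]
    | zero => exact inner_zero_right _
    | add x z _ _ hx hz => rw [inner_add_right, hx, hz, add_zero]
    | smul a x _ hx => rw [real_inner_smul_right, hx, mul_zero]

private lemma aux_surj {n m : ℕ} (C : Fin m → EuclideanSpace ℝ (Fin n)) (E : Set (Fin m))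
    (hind : LinearIndependent ℝ (fun i : E => C i.1)) :
    ∃ y : EuclideanSpace ℝ (Fin n), ∀ i ∈ E, (inner ℝ (C i) y : ℝ) = -1 := by
  classical
  haveI : Fintype E := Fintype.ofFinite E
  set K := Submodule.span ℝ (Set.range fun i : E => C i.1) with hK
  let L : K →ₗ[ℝ] (E → ℝ) :=
    (LinearMap.pi fun i : E => ((innerSL ℝ (C i.1)).toLinearMap)).comp K.subtype
  have hinj : Function.Injective L := by
    rw [← LinearMap.ker_eq_bot, LinearMap.ker_eq_bot']
    intro v hv
    have hv' : ∀ i : E, (inner ℝ (C i.1) (v : EuclideanSpace ℝ (Fin n)) : ℝ) = 0 := by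
      intro i
      exact congrFun hv i
    have horth : (v : EuclideanSpace ℝ (Fin n)) ∈ Kᗮ := by
      refine mem_orth_span.2 ?_
      rintro u ⟨i, rfl⟩
      exact hv' i
    have := Submodule.orthogonal_disjoint K
    have hz : (v : EuclideanSpace ℝ (Fin n)) = 0 :=
      Submodule.disjoint_def.1 this v v.2 horth
    exact Subtype.ext hz
  have hdim : Module.finrank ℝ K = Fintype.card E := finrank_span_eq_card hind
  have hdim2 : Module.finrank ℝ (E → ℝ) = Fintype.card E :=
    Module.finrank_fintype_fun_eq_card ℝ
  have hsurj : Function.Surjective L :=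
    (LinearMap.injective_iff_surjective_of_finrank_eq_finrank
      (by rw [hdim, hdim2])).1 hinj
  obtain ⟨y, hy⟩ := hsurj (fun _ => -1)
  refine ⟨y, fun i hi => ?_⟩
  have := congrFun hy ⟨i, hi⟩
  simpa [L] using this

/-- For a nonempty bounded polyhedron `P` of dimension `k < n`, the implicit-equality
subsystem has rank `n - k` and at least `n - k + 1` members; its rows are linearly dependent. -/
theorem stmt8 (n m : ℕ) (C : Fin m → EuclideanSpace ℝ (Fin n)) (d : Fin m → ℝ)
    (P : Set (EuclideanSpace ℝ (Fin n)))
    (hP : P = {x | ∀ i, ∑ j, C i j * x j ≤ d i})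
    (hne : P.Nonempty) (hbd : Bornology.IsBounded P)
    (k : ℕ) (hk : k = Module.finrank ℝ (vectorSpan ℝ P)) (hkn : k < n)
    (E : Set (Fin m)) (hE : E = {i | ∀ x ∈ P, ∑ j, C i j * x j = d i}) :
    Module.finrank ℝ (Submodule.span ℝ (C '' E)) = n - k ∧
    n - k + 1 ≤ E.ncard ∧
    ¬ LinearIndependent ℝ (fun i : E => C i.1) := by
  classical
  haveI : Fintype E := Fintype.ofFinite E
  set K := Submodule.span ℝ (C '' E) with hKdef
  have hspan : Kᗮ = vectorSpan ℝ P := aux_span C d P hP hne E hE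
  have hsum : Module.finrank ℝ K + Module.finrank ℝ Kᗮ = n := by
    rw [Submodule.finrank_add_finrank_orthogonal, finrank_euclideanSpace_fin]
  have hkk : Module.finrank ℝ Kᗮ = k := by rw [hspan, hk]
  have hrank : Module.finrank ℝ K = n - k := by omega
  have hrange : Set.range (fun i : E => C i.1) = C '' E := (Set.image_eq_range C E).symm
  -- part 3
  have part3 : ¬ LinearIndependent ℝ (fun i : E => C i.1) := by
    intro hind
    -- E is nonempty
    have hEne : E.Nonempty := by
      rcases Set.eq_empty_or_nonempty E with h | h
      · rw [h] at hKdef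
        simp only [Set.image_empty, Submodule.span_empty] at hKdef
        rw [hKdef, finrank_bot] at hrank
        omega
      · exact h
    obtain ⟨i₀, hi₀⟩ := hEne
    obtain ⟨y, hy⟩ := aux_surj C E hind
    obtain ⟨x₀, hx₀, hstrict⟩ := aux_strict C d P hP hne E hE
    obtain ⟨t, ht, htP⟩ := aux_move C d P hP E x₀ hx₀ hstrict y
      (fun i hi => by rw [hy i hi]; norm_num)
    have heq : (inner ℝ (C i₀) (x₀ + t • y) : ℝ) = d i₀ := by
      rw [← sum_eq_inner']
      rw [hE] at hi₀
      exact hi₀ (x₀ + t • y) htP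
    have heq0 : (inner ℝ (C i₀) x₀ : ℝ) = d i₀ := by
      rw [← sum_eq_inner']
      rw [hE] at hi₀
      exact hi₀ x₀ hx₀
    rw [inner_add_right, real_inner_smul_right, hy i₀ hi₀, heq0] at heq
    linarith
  refine ⟨hrank, ?_, part3⟩
  -- part 2
  have hcard : Fintype.card E = E.ncard := by
    rw [← Nat.card_coe_set_eq, Nat.card_eq_fintype_card]
  have hub : Module.finrank ℝ K ≤ E.ncard := by
    calc Module.finrank ℝ K ≤ (C '' E).toFinset.card := finrank_span_le_card _
      _ = (C '' E).ncard := (Set.ncard_eq_toFinset_card' _).symm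
      _ ≤ E.ncard := Set.ncard_image_le (Set.toFinite E)
  have hne2 : E.ncard ≠ n - k := by
    intro h
    apply part3
    rw [linearIndependent_iff_card_eq_finrank_span, hcard, h]
    show n - k = Module.finrank ℝ (Submodule.span ℝ (Set.range fun i : E => C i.1))
    rw [hrange, ← hKdef, hrank]
  omega
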